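/- Let p, q ∈ [0,1] and α ∈ (0, 1/2] with α ≤ q ≤ 1 − α. Then the binary relative entropy satisfies d(p,q) = p log(p/q) + (1−p) log((1−p)/(1−q)) ≤ (2/α)(p − q)². -/
import Mathlib

lemma aux_log_bound (x c : ℝ) (hx : 0 ≤ x) (hc : 0 < c) :
    x * Real.log (x / c) ≤ x * (x - c) / c := by
  rcases eq_or_lt_of_le hx with h | h
  · simp [← h]
  · have hxc : 0 < x / c := div_pos h hc
    have := Real.log_le_sub_one_of_pos hxc
    calc x * Real.log (x / c) ≤ x * (x / c - 1) := by nlinarith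
      _ = x * (x - c) / c := by field_simp

/-- Binary relative entropy bound: for `p, q ∈ [0,1]` and `α ∈ (0, 1/2]` with
`α ≤ q ≤ 1 - α`, `d(p,q) = p log(p/q) + (1-p) log((1-p)/(1-q)) ≤ (2/α)(p-q)²`. -/
theorem stmt_9 (p q α : ℝ) (hp : p ∈ Set.Icc (0 : ℝ) 1)
    (hα : α ∈ Set.Ioc (0 : ℝ) (1 / 2)) (hq1 : α ≤ q) (hq2 : q ≤ 1 - α) :
    p * Real.log (p / q) + (1 - p) * Real.log ((1 - p) / (1 - q)) ≤
      (2 / α) * (p - q) ^ 2 := by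
  obtain ⟨hp0, hp1⟩ := hp
  obtain ⟨hα0, hα2⟩ := hα
  have hq0 : 0 < q := lt_of_lt_of_le hα0 hq1
  have hq1' : 0 < 1 - q := lt_of_lt_of_le hα0 (by linarith)
  have h1 := aux_log_bound p q hp0 hq0
  have h2 := aux_log_bound (1 - p) (1 - q) (by linarith) hq1'
  have hsum : p * (p - q) / q + (1 - p) * ((1 - p) - (1 - q)) / (1 - q)
      = (p - q) ^ 2 / (q * (1 - q)) := by
    field_simp; ring
  have hprod : α / 2 ≤ q * (1 - q) := by
    rcases le_total q (1/2) with h | h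
    · nlinarith
    · nlinarith
  have hfin : (p - q) ^ 2 / (q * (1 - q)) ≤ (2 / α) * (p - q) ^ 2 := by
    rw [div_le_iff₀ (by positivity)]
    have : (2 / α) * (α / 2) ≤ (2 / α) * (q * (1 - q)) := by
      apply mul_le_mul_of_nonneg_left hprod (by positivity)
    have h1 : (2 / α) * (α / 2) = 1 := by field_simp
    nlinarith [sq_nonneg (p - q)]
  linarith
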